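/- The multiplicative degree-Kirchhoff index of S_n × K_2 equals (48n³ + 25n² - 180n + 116)/(3n + 6). -/

import Mathlib

open Polynomial

/-- `S_n × K_2` on vertex set `Fin n × Fin 2` (star center: first coordinate `0`). -/
def snK2 (n : ℕ) : SimpleGraph (Fin n × Fin 2) :=
  SimpleGraph.fromRel (fun p q => (p.2 = q.2 ∧ (p.1.val = 0 ∨ q.1.val = 0)) ∨ p.1 = q.1)

instance (n : ℕ) : DecidableRel (snK2 n).Adj := by
  unfold snK2
  exact fun p q => decidable_of_iff _ (SimpleGraph.fromRel_adj _ p q).symm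

/-- The normalized Laplacian matrix of a finite graph: `1` on the diagonal,
`-1/√(dᵢdⱼ)` for edges, and `0` otherwise. -/
noncomputable def normLap {V : Type*} [Fintype V] [DecidableEq V] (G : SimpleGraph V)
    [DecidableRel G.Adj] : Matrix V V ℝ :=
  Matrix.of fun i j =>
    if i = j then 1
    else if G.Adj i j then -1 / Real.sqrt ((G.degree i : ℝ) * G.degree j) else 0

namespace KAux

open Finset Matrix

/-- Characteristic polynomial is invariant under conjugation. -/
lemma charpoly_conj {V : Type*} [Fintype V] [DecidableEq V]
    (A B M : Matrix V V ℝ) (h : A * B = 1) :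
    (A * M * B).charpoly = M.charpoly := by
  classical
  have hAB : A.map (C : ℝ →+* ℝ[X]) * B.map (C : ℝ →+* ℝ[X]) = 1 := by
    rw [← Matrix.map_mul, h, Matrix.map_one _ (map_zero _) (map_one _)]
  have key : Matrix.charmatrix (A * M * B) =
      A.map (C : ℝ →+* ℝ[X]) * Matrix.charmatrix M * B.map (C : ℝ →+* ℝ[X]) := by
    unfold Matrix.charmatrix
    rw [Matrix.mul_sub, Matrix.sub_mul]
    congr 1
    · rw [Matrix.scalar_apply, ← Matrix.smul_one_eq_diagonal, Matrix.mul_smul,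
        Matrix.mul_one, Matrix.smul_mul, hAB]
    · simp only [RingHom.mapMatrix_apply]
      rw [← Matrix.map_mul, ← Matrix.map_mul]
  rw [Matrix.charpoly, Matrix.charpoly, key, Matrix.det_mul, Matrix.det_mul]
  have hd : (A.map (C : ℝ →+* ℝ[X])).det * (B.map (C : ℝ →+* ℝ[X])).det = 1 := by
    rw [← Matrix.det_mul, hAB, Matrix.det_one]
  calc (A.map (C : ℝ →+* ℝ[X])).det * (Matrix.charmatrix M).det
        * (B.map (C : ℝ →+* ℝ[X])).det
      = (Matrix.charmatrix M).det *
        ((A.map (C : ℝ →+* ℝ[X])).det * (B.map (C : ℝ →+* ℝ[X])).det) := by ring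
    _ = (Matrix.charmatrix M).det := by rw [hd, mul_one]

lemma charpoly_diagonal {V : Type*} [Fintype V] [DecidableEq V] (f : V → ℝ) :
    (Matrix.diagonal f).charpoly = ∏ i, (X - C (f i)) := by
  unfold Matrix.charpoly
  have : Matrix.charmatrix (Matrix.diagonal f) =
      Matrix.diagonal (fun i => (X : ℝ[X]) - C (f i)) := by
    apply Matrix.ext; intro i j
    by_cases h : i = j
    · subst h; simp [Matrix.charmatrix_apply_eq, Matrix.diagonal_apply_eq]
    · rw [Matrix.charmatrix_apply_ne _ _ _ h, Matrix.diagonal_apply_ne _ h,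
        Matrix.diagonal_apply_ne _ h, map_zero, neg_zero]
  rw [this, Matrix.det_diagonal]

variable (m : ℕ)

/-- the other element of `Fin 2` -/
def flip2 (e : Fin 2) : Fin 2 := if e = 0 then 1 else 0

def lst : Fin (m + 2) := ⟨m + 1, by omega⟩

lemma lst_ne_zero : lst m ≠ 0 := by simp [lst, Fin.ext_iff]

lemma flip2_ne (e : Fin 2) : flip2 e ≠ e := by
  fin_cases e <;> simp [flip2]

lemma snK2_adj (p q : Fin (m + 2) × Fin 2) :
    (snK2 (m + 2)).Adj p q ↔ p ≠ q ∧ ((p.2 = q.2 ∧ (p.1 = 0 ∨ q.1 = 0)) ∨ p.1 = q.1) := by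
  unfold snK2
  rw [SimpleGraph.fromRel_adj]
  have hv : ∀ a : Fin (m + 2), a.val = 0 ↔ a = 0 := fun a => by
    simp [Fin.ext_iff, -Fin.val_eq_zero_iff]
  constructor
  · rintro ⟨h1, h2⟩
    refine ⟨h1, ?_⟩
    rcases h2 with (⟨h3, h4⟩ | h5) | (⟨h3, h4⟩ | h5)
    · exact Or.inl ⟨h3, by rw [← hv, ← hv]; tauto⟩
    · exact Or.inr h5
    · exact Or.inl ⟨h3.symm, by rw [← hv, ← hv]; tauto⟩
    · exact Or.inr h5.symm
  · rintro ⟨h1, h2⟩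
    refine ⟨h1, ?_⟩
    rcases h2 with ⟨h3, h4⟩ | h5
    · exact Or.inl (Or.inl ⟨h3, by rw [hv, hv]; tauto⟩)
    · exact Or.inl (Or.inr h5)

lemma adj_center (ε : Fin 2) (j : Fin (m + 2)) (δ : Fin 2) :
    (snK2 (m + 2)).Adj (0, ε) (j, δ) ↔ (j = 0 ∧ δ ≠ ε) ∨ (j ≠ 0 ∧ δ = ε) := by
  rw [snK2_adj]
  constructor
  · rintro ⟨h1, h2⟩
    by_cases hj : j = 0
    · subst hj
      exact Or.inl ⟨rfl, fun hh => h1 (by simp [hh])⟩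
    · refine Or.inr ⟨hj, ?_⟩
      rcases h2 with ⟨h3, _⟩ | h4
      · exact h3.symm
      · exact absurd h4.symm hj
  · rintro (⟨rfl, hδ⟩ | ⟨hj, rfl⟩)
    · exact ⟨by simp [Prod.ext_iff, Ne.symm hδ], Or.inr rfl⟩
    · exact ⟨by simp [Prod.ext_iff, Ne.symm hj], Or.inl ⟨rfl, Or.inl rfl⟩⟩

lemma adj_leaf (i : Fin (m + 2)) (hi : i ≠ 0) (ε : Fin 2) (j : Fin (m + 2)) (δ : Fin 2) :
    (snK2 (m + 2)).Adj (i, ε) (j, δ) ↔ (j = 0 ∧ δ = ε) ∨ (j = i ∧ δ ≠ ε) := by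
  rw [snK2_adj]
  constructor
  · rintro ⟨h1, h2⟩
    rcases h2 with ⟨h3, h4⟩ | h5
    · rcases h4 with h4 | h4
      · exact absurd h4 hi
      · exact Or.inl ⟨h4, h3.symm⟩
    · exact Or.inr ⟨h5.symm, fun hh => h1 (Prod.ext_iff.mpr ⟨h5, hh.symm⟩)⟩
  · rintro (⟨rfl, rfl⟩ | ⟨rfl, hδ⟩)
    · exact ⟨by simp [Prod.ext_iff, hi], Or.inl ⟨rfl, Or.inr rfl⟩⟩
    · exact ⟨by simp [Prod.ext_iff, Ne.symm hδ], Or.inr rfl⟩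

lemma sum_fin2 {R : Type*} [AddCommMonoid R] (ε : Fin 2) (f : Fin 2 → R) :
    ∑ δ, f δ = f ε + f (flip2 ε) := by
  fin_cases ε <;> simp [flip2, Fin.sum_univ_two] <;> exact add_comm _ _

lemma sum_nbr_center {R : Type*} [AddCommMonoid R] (ε : Fin 2)
    (v : Fin (m + 2) × Fin 2 → R) :
    ∑ q ∈ (snK2 (m + 2)).neighborFinset (0, ε), v q =
      v (0, flip2 ε) + ∑ j ∈ Finset.univ.erase (0 : Fin (m + 2)), v (j, ε) := by
  rw [SimpleGraph.neighborFinset_eq_filter, Finset.sum_filter, Fintype.sum_prod_type]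
  rw [Finset.sum_congr rfl (fun j _ =>
    sum_fin2 ε (fun δ => if (snK2 (m + 2)).Adj (0, ε) (j, δ) then v (j, δ) else 0))]
  have hc1 : ∀ j : Fin (m + 2),
      (if (snK2 (m + 2)).Adj (0, ε) (j, ε) then v (j, ε) else 0) =
      (if j = 0 then 0 else v (j, ε)) := by
    intro j
    by_cases hj : j = 0 <;> simp [adj_center, hj]
  have hc2 : ∀ j : Fin (m + 2),
      (if (snK2 (m + 2)).Adj (0, ε) (j, flip2 ε) then v (j, flip2 ε) else 0) =
      (if j = 0 then v (j, flip2 ε) else 0) := by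
    intro j
    by_cases hj : j = 0 <;> simp [adj_center, hj, flip2_ne ε]
  rw [Finset.sum_congr rfl (fun j _ => by rw [hc1 j, hc2 j])]
  rw [Finset.sum_add_distrib, Finset.sum_ite_eq' Finset.univ (0 : Fin (m + 2))
    (fun j => v (j, flip2 ε))]
  rw [← Finset.add_sum_erase _ _ (Finset.mem_univ (0 : Fin (m + 2))), if_pos rfl]
  rw [Finset.sum_congr rfl (fun j hj => if_neg (Finset.mem_erase.mp hj).1)]
  simp only [Finset.mem_univ, if_pos]
  abel

lemma sum_nbr_leaf {R : Type*} [AddCommMonoid R] (i : Fin (m + 2)) (hi : i ≠ 0) (ε : Fin 2)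
    (v : Fin (m + 2) × Fin 2 → R) :
    ∑ q ∈ (snK2 (m + 2)).neighborFinset (i, ε), v q = v (0, ε) + v (i, flip2 ε) := by
  rw [SimpleGraph.neighborFinset_eq_filter, Finset.sum_filter, Fintype.sum_prod_type]
  rw [Finset.sum_congr rfl (fun j _ =>
    sum_fin2 ε (fun δ => if (snK2 (m + 2)).Adj (i, ε) (j, δ) then v (j, δ) else 0))]
  have hc1 : ∀ j : Fin (m + 2),
      (if (snK2 (m + 2)).Adj (i, ε) (j, ε) then v (j, ε) else 0) =
      (if j = 0 then v (j, ε) else 0) := by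
    intro j
    by_cases hj : j = 0 <;> simp [adj_leaf m i hi, hj]
  have hc2 : ∀ j : Fin (m + 2),
      (if (snK2 (m + 2)).Adj (i, ε) (j, flip2 ε) then v (j, flip2 ε) else 0) =
      (if j = i then v (j, flip2 ε) else 0) := by
    intro j
    by_cases hj : j = i <;> simp [adj_leaf m i hi, hj, flip2_ne ε]
  rw [Finset.sum_congr rfl (fun j _ => by rw [hc1 j, hc2 j])]
  rw [Finset.sum_add_distrib, Finset.sum_ite_eq' Finset.univ (0 : Fin (m + 2))
    (fun j => v (j, ε)), Finset.sum_ite_eq' Finset.univ i (fun j => v (j, flip2 ε))]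
  simp only [Finset.mem_univ, if_pos]

lemma degree_center (ε : Fin 2) : (snK2 (m + 2)).degree (0, ε) = m + 2 := by
  rw [SimpleGraph.degree, Finset.card_eq_sum_ones, sum_nbr_center]
  rw [Finset.sum_const, Finset.card_erase_of_mem (Finset.mem_univ _), Finset.card_univ]
  simp
  omega

lemma degree_leaf (i : Fin (m + 2)) (hi : i ≠ 0) (ε : Fin 2) :
    (snK2 (m + 2)).degree (i, ε) = 2 := by
  rw [SimpleGraph.degree, Finset.card_eq_sum_ones, sum_nbr_leaf m i hi]

/-! ### The random-walk Laplacian and explicit eigenvector matrices -/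

/-- degree function as a real number -/
noncomputable def dd : Fin (m + 2) × Fin 2 → ℝ := fun p => if p.1 = 0 then (m : ℝ) + 2 else 2

/-- the random-walk Laplacian `I - D⁻¹A` -/
noncomputable def Lp : Matrix (Fin (m + 2) × Fin 2) (Fin (m + 2) × Fin 2) ℝ :=
  Matrix.of fun p q => if p = q then 1 else
    if (snK2 (m + 2)).Adj p q then -(1 / dd m p) else 0

noncomputable def sgn : Fin 2 → Fin 2 → ℝ := fun γ ε => if γ = 1 ∧ ε = 1 then -1 else 1

/-- base eigenvectors (columns) -/
noncomputable def bb : Fin 2 → Fin (m + 2) → Fin (m + 2) → ℝ := fun γ k i =>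
  if k = 0 then (if i = 0 then (if γ = 0 then 1 else -1) else 1)
  else if k = lst m then
    (if i = 0 then (if γ = 0 then -(2 * ((m : ℝ) + 1)) else 2 * ((m : ℝ) + 1))
     else (m : ℝ) + 2)
  else (if i = k then 1 else 0) - (if i = lst m then 1 else 0)

/-- base dual vectors (rows) -/
noncomputable def cc : Fin 2 → Fin (m + 2) → Fin (m + 2) → ℝ := fun γ k i =>
  if k = 0 then
    (if i = 0 then (if γ = 0 then ((m : ℝ) + 2) / (6 * m + 8) else -(((m : ℝ) + 2) / (6 * m + 8)))
     else 2 / (6 * (m : ℝ) + 8))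
  else if k = lst m then
    (if i = 0 then (if γ = 0 then -(1 / (2 * (3 * (m : ℝ) + 4))) else 1 / (2 * (3 * (m : ℝ) + 4)))
     else 1 / (2 * ((m : ℝ) + 1) * (3 * (m : ℝ) + 4)))
  else ((if i = k then 1 else 0) - (if i = 0 then 0 else 1 / ((m : ℝ) + 1))) * (1 / 2)

/-- the eigenvalues -/
noncomputable def ev : Fin (m + 2) × Fin 2 → ℝ := fun c =>
  if c.1 = 0 then (if c.2 = 0 then 0 else 2)
  else if c.1 = lst m then
    (if c.2 = 0 then (3 * (m : ℝ) + 4) / (2 * (m : ℝ) + 4) else ((m : ℝ) + 4) / (2 * (m : ℝ) + 4))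
  else (if c.2 = 0 then 1 / 2 else 3 / 2)

noncomputable def PP : Matrix (Fin (m + 2) × Fin 2) (Fin (m + 2) × Fin 2) ℝ :=
  Matrix.of fun p q => sgn q.2 p.2 * bb m q.2 q.1 p.1

noncomputable def QQ : Matrix (Fin (m + 2) × Fin 2) (Fin (m + 2) × Fin 2) ℝ :=
  Matrix.of fun p q => sgn p.2 q.2 * cc m p.2 p.1 q.1

lemma dd_eq_degree (p : Fin (m + 2) × Fin 2) :
    ((snK2 (m + 2)).degree p : ℝ) = dd m p := by
  obtain ⟨i, ε⟩ := p
  by_cases hi : i = 0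
  · subst hi; rw [degree_center]; push_cast; simp [dd]
  · rw [degree_leaf m i hi]; simp [dd, hi]

lemma dd_pos (p : Fin (m + 2) × Fin 2) : 0 < dd m p := by
  unfold dd; split <;> positivity

/-! ### sums over `Fin (m+2)` minus the origin -/

lemma sum_erase_const (r : ℝ) :
    ∑ _j ∈ Finset.univ.erase (0 : Fin (m + 2)), r = ((m : ℝ) + 1) * r := by
  rw [Finset.sum_const, Finset.card_erase_of_mem (Finset.mem_univ _), Finset.card_univ]
  simp only [Fintype.card_fin, nsmul_eq_mul]
  push_cast
  ring

lemma sum_erase_one (a : Fin (m + 2)) (ha : a ≠ 0) (x z : ℝ) :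
    ∑ j ∈ Finset.univ.erase (0 : Fin (m + 2)), (if j = a then x else z) = x + (m : ℝ) * z := by
  have ha' : a ∈ Finset.univ.erase (0 : Fin (m + 2)) :=
    Finset.mem_erase.mpr ⟨ha, Finset.mem_univ _⟩
  rw [← Finset.add_sum_erase _ _ ha', if_pos rfl,
    Finset.sum_congr rfl (fun j hj => if_neg (Finset.mem_erase.mp hj).1)]
  rw [Finset.sum_const, Finset.card_erase_of_mem ha',
    Finset.card_erase_of_mem (Finset.mem_univ _), Finset.card_univ]
  simp only [Fintype.card_fin, nsmul_eq_mul]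
  have : (m + 2 - 1 - 1 : ℕ) = m := by omega
  rw [this]

lemma sum_erase_two (a b : Fin (m + 2)) (ha : a ≠ 0) (hb : b ≠ 0) (hab : a ≠ b) (x y : ℝ) :
    ∑ j ∈ Finset.univ.erase (0 : Fin (m + 2)),
      (if j = a then x else if j = b then y else 0) = x + y := by
  have key : ∀ j : Fin (m + 2), (if j = a then x else if j = b then y else 0) =
      (if j = a then x else 0) + (if j = b then y else 0) := by
    intro j
    by_cases h1 : j = a
    · subst h1; rw [if_pos rfl, if_pos rfl, if_neg hab, add_zero]
    · rw [if_neg h1, if_neg h1, zero_add]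
  rw [Finset.sum_congr rfl (fun j _ => key j), Finset.sum_add_distrib,
    Finset.sum_ite_eq' _ a (fun _ => x), Finset.sum_ite_eq' _ b (fun _ => y),
    if_pos (Finset.mem_erase.mpr ⟨ha, Finset.mem_univ _⟩),
    if_pos (Finset.mem_erase.mpr ⟨hb, Finset.mem_univ _⟩)]

lemma Lp_mulVec (v : Fin (m + 2) × Fin 2 → ℝ) (p : Fin (m + 2) × Fin 2) :
    (Lp m).mulVec v p =
      v p - (1 / dd m p) * ∑ q ∈ (snK2 (m + 2)).neighborFinset p, v q := by
  have key : ∀ q, Lp m p q * v q =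
      (if q = p then v q else 0) +
        -((1 / dd m p) * (if (snK2 (m + 2)).Adj p q then v q else 0)) := by
    intro q
    by_cases h1 : p = q
    · subst h1
      simp [Lp, SimpleGraph.irrefl]
    · by_cases h2 : (snK2 (m + 2)).Adj p q
      · simp only [Lp, Matrix.of_apply, if_neg h1, if_pos h2, if_neg (Ne.symm h1)]
        ring
      · simp [Lp, h1, h2, Ne.symm h1]
  show ∑ q, Lp m p q * v q = _
  rw [Finset.sum_congr rfl (fun q _ => key q), Finset.sum_add_distrib,
    Finset.sum_ite_eq' Finset.univ p v, if_pos (Finset.mem_univ _)]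
  rw [show ∀ S : ℝ, (∑ x : Fin (m + 2) × Fin 2,
      -(1 / dd m p * if (snK2 (m + 2)).Adj p x then v x else 0)) = S → _ from fun S h => h]
  rotate_left
  · exact - (1 / dd m p * ∑ x : Fin (m + 2) × Fin 2,
      (if (snK2 (m + 2)).Adj p x then v x else 0))
  · rw [Finset.sum_neg_distrib, ← Finset.mul_sum]
  rw [SimpleGraph.neighborFinset_eq_filter, Finset.sum_filter]
  ring

/-! ### key sums -/

lemma mfacts : (6 * (m : ℝ) + 8) ≠ 0 ∧ (3 * (m : ℝ) + 4) ≠ 0 ∧ ((m : ℝ) + 1) ≠ 0 ∧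
    ((m : ℝ) + 2) ≠ 0 ∧ (2 * (m : ℝ) + 4) ≠ 0 := by
  refine ⟨?_, ?_, ?_, ?_, ?_⟩ <;> positivity

lemma sum_erase_bb (γ : Fin 2) (k : Fin (m + 2)) :
    ∑ j ∈ Finset.univ.erase (0 : Fin (m + 2)), bb m γ k j =
      if k = 0 then (m : ℝ) + 1
      else if k = lst m then ((m : ℝ) + 1) * ((m : ℝ) + 2) else 0 := by
  by_cases hk : k = 0
  · subst hk
    rw [Finset.sum_congr rfl (fun j hj => by
      simp [bb, (Finset.mem_erase.mp hj).1] : ∀ j ∈ Finset.univ.erase (0 : Fin (m + 2)),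
        bb m γ 0 j = 1), sum_erase_const, if_pos rfl, mul_one]
  · by_cases hk2 : k = lst m
    · subst hk2
      rw [Finset.sum_congr rfl (fun j hj => by
        simp [bb, (Finset.mem_erase.mp hj).1, lst_ne_zero] :
          ∀ j ∈ Finset.univ.erase (0 : Fin (m + 2)), bb m γ (lst m) j = (m : ℝ) + 2),
        sum_erase_const, if_neg (lst_ne_zero m), if_pos rfl]
    · rw [Finset.sum_congr rfl (fun j hj => by
        by_cases hjk : j = k <;> by_cases hjl : j = lst m <;>
          simp [bb, hk, hk2, hjk, hjl] <;> simp_all :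
          ∀ j ∈ Finset.univ.erase (0 : Fin (m + 2)),
            bb m γ k j = if j = k then (1 : ℝ) else if j = lst m then -1 else 0),
        sum_erase_two m k (lst m) hk (lst_ne_zero m) hk2, if_neg hk, if_neg hk2]
      ring

lemma cb_gamma (γ : Fin 2) (k k' i : Fin (m + 2)) :
    cc m γ k i * bb m γ k' i = cc m 0 k i * bb m 0 k' i := by
  fin_cases γ
  · rfl
  · simp only [cc, bb]
    by_cases hi : i = 0 <;> by_cases hk : k = 0 <;> by_cases hk2 : k = lst m <;>
      by_cases hk' : k' = 0 <;> by_cases hk2' : k' = lst m <;>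
        simp [hi, hk, hk2, hk', hk2'] <;>
          first
            | ring1
            | (simp only [if_neg hk', if_neg (Ne.symm hk'), if_neg hk2',
                if_neg (Ne.symm hk2'), if_neg (lst_ne_zero m),
                if_neg (Ne.symm (lst_ne_zero m))]; ring1)
            | (simp only [if_neg hk', if_neg (Ne.symm hk'), if_neg (lst_ne_zero m),
                if_neg (Ne.symm (lst_ne_zero m))]; ring1)
            | (simp only [if_neg hk2', if_neg (Ne.symm hk2'), if_neg (lst_ne_zero m),
                if_neg (Ne.symm (lst_ne_zero m))]; ring1)
            | (simp only [if_neg (lst_ne_zero m), if_neg (Ne.symm (lst_ne_zero m))]; ring1)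
            | (simp only [if_neg hk, if_neg (Ne.symm hk), if_neg hk2,
                if_neg (Ne.symm hk2)]; ring1)
            | (simp only [if_neg hk, if_neg (Ne.symm hk)]; ring1)
            | (simp_all [lst, Fin.ext_iff, -Fin.val_eq_zero_iff];
                try (rw [if_neg (show ¬(0 : ℕ) = (k : ℕ) by omega)]; ring1))

lemma sum_cb (γ : Fin 2) (k k' : Fin (m + 2)) :
    ∑ j, cc m γ k j * bb m γ k' j = if k = k' then (1 / 2 : ℝ) else 0 := by
  obtain ⟨h68, h34, h1, h2, h24⟩ := mfacts m
  rw [Finset.sum_congr rfl (fun j _ => cb_gamma m γ k k' j),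
    ← Finset.add_sum_erase _ _ (Finset.mem_univ (0 : Fin (m + 2)))]
  by_cases hk : k = 0
  · subst hk
    rw [Finset.sum_congr rfl (fun j hj => by
      simp [cc, (Finset.mem_erase.mp hj).1] :
        ∀ j ∈ Finset.univ.erase (0 : Fin (m + 2)),
          cc m 0 0 j * bb m 0 k' j = (2 / (6 * (m : ℝ) + 8)) * bb m 0 k' j),
      ← Finset.mul_sum, sum_erase_bb]
    by_cases hk' : k' = 0
    · subst hk'
      simp only [cc, bb, if_pos rfl, if_true]
      field_simp
      try ring1
    · by_cases hk2' : k' = lst m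
      · subst hk2'
        simp only [cc, bb, if_pos rfl, if_neg (lst_ne_zero m), if_neg (Ne.symm (lst_ne_zero m)), if_true]
        field_simp
        try ring1
      · simp only [cc, bb, if_pos rfl, if_neg hk', if_neg hk2', if_neg (Ne.symm hk'),
          if_neg (Ne.symm (lst_ne_zero m))]
        simp
  · by_cases hk2 : k = lst m
    · subst hk2
      rw [Finset.sum_congr rfl (fun j hj => by
        simp [cc, (Finset.mem_erase.mp hj).1, lst_ne_zero] :
          ∀ j ∈ Finset.univ.erase (0 : Fin (m + 2)),
            cc m 0 (lst m) j * bb m 0 k' j =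
              (1 / (2 * ((m : ℝ) + 1) * (3 * (m : ℝ) + 4))) * bb m 0 k' j),
        ← Finset.mul_sum, sum_erase_bb]
      by_cases hk' : k' = 0
      · subst hk'
        simp only [cc, bb, if_pos rfl, if_neg (lst_ne_zero m), if_true]
        field_simp
        try ring1
      · by_cases hk2' : k' = lst m
        · subst hk2'
          simp only [cc, bb, if_pos rfl, if_neg (lst_ne_zero m), if_true]
          field_simp
          try ring1
        · simp only [cc, bb, if_neg hk', if_neg hk2', if_neg (lst_ne_zero m), if_pos rfl,
            if_neg (Ne.symm hk'), if_neg (Ne.symm (lst_ne_zero m))]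
          simp [Ne.symm hk2']
    · -- k is a "middle" index
      have hcc0 : cc m 0 k 0 = 0 := by simp [cc, hk, hk2, Ne.symm hk]
      rw [hcc0, zero_mul, zero_add]
      by_cases hk' : k' = 0
      · subst hk'
        rw [Finset.sum_congr rfl (fun j hj => by
          by_cases hjk : j = k <;>
            simp [cc, bb, hk, hk2, hjk, (Finset.mem_erase.mp hj).1] :
            ∀ j ∈ Finset.univ.erase (0 : Fin (m + 2)),
              cc m 0 k j * bb m 0 0 j =
                if j = k then ((1 - 1 / ((m : ℝ) + 1)) * (1 / 2)) else
                  ((0 - 1 / ((m : ℝ) + 1)) * (1 / 2))),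
          sum_erase_one m k hk, if_neg hk]
        field_simp
        try ring1
      · by_cases hk2' : k' = lst m
        · subst hk2'
          rw [Finset.sum_congr rfl (fun j hj => by
            by_cases hjk : j = k <;>
              simp [cc, bb, hk, hk2, hjk, (Finset.mem_erase.mp hj).1, lst_ne_zero] :
              ∀ j ∈ Finset.univ.erase (0 : Fin (m + 2)),
                cc m 0 k j * bb m 0 (lst m) j =
                  if j = k then ((1 - 1 / ((m : ℝ) + 1)) * (1 / 2) * ((m : ℝ) + 2)) else
                    ((0 - 1 / ((m : ℝ) + 1)) * (1 / 2) * ((m : ℝ) + 2))),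
            sum_erase_one m k hk, if_neg hk2]
          field_simp
          try ring1
        · by_cases hkk : k = k'
          · subst hkk
            rw [Finset.sum_congr rfl (fun j hj => by
              by_cases hjk : j = k <;> by_cases hjl : j = lst m <;>
                simp [cc, bb, hk, hk2, hjk, hjl, (Finset.mem_erase.mp hj).1] <;> simp_all :
                ∀ j ∈ Finset.univ.erase (0 : Fin (m + 2)),
                  cc m 0 k j * bb m 0 k j =
                    if j = k then ((1 - 1 / ((m : ℝ) + 1)) * (1 / 2)) else
                      if j = lst m then ((0 - 1 / ((m : ℝ) + 1)) * (1 / 2) * (-1)) else 0),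
              sum_erase_two m k (lst m) hk (lst_ne_zero m) hk2, if_pos rfl]
            field_simp
            try ring1
          · rw [Finset.sum_congr rfl (fun j hj => by
              by_cases hjk : j = k' <;> by_cases hjl : j = lst m <;>
                by_cases hjk0 : j = k <;>
                simp [cc, bb, hk, hk2, hk', hk2', hjk, hjl, hjk0,
                  (Finset.mem_erase.mp hj).1] <;> simp_all :
                ∀ j ∈ Finset.univ.erase (0 : Fin (m + 2)),
                  cc m 0 k j * bb m 0 k' j =
                    if j = k' then ((0 - 1 / ((m : ℝ) + 1)) * (1 / 2)) else
                      if j = lst m then ((0 - 1 / ((m : ℝ) + 1)) * (1 / 2) * (-1)) else 0),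
              sum_erase_two m k' (lst m) hk' (lst_ne_zero m) hk2', if_neg hkk]
            ring

lemma eigen (k : Fin (m + 2)) (γ : Fin 2) (p : Fin (m + 2) × Fin 2) :
    (Lp m).mulVec (fun q => PP m q (k, γ)) p = ev m (k, γ) * PP m p (k, γ) := by
  obtain ⟨h68, h34, h1, h2, h24⟩ := mfacts m
  obtain ⟨i, ε⟩ := p
  rw [Lp_mulVec]
  by_cases hi : i = 0
  · subst hi
    rw [sum_nbr_center]
    have hdd : dd m (0, ε) = (m : ℝ) + 2 := by simp [dd]
    rw [hdd]
    have hsum : ∑ j ∈ Finset.univ.erase (0 : Fin (m + 2)), (fun q => PP m q (k, γ)) (j, ε)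
        = sgn γ ε * (if k = 0 then (m : ℝ) + 1
            else if k = lst m then ((m : ℝ) + 1) * ((m : ℝ) + 2) else 0) := by
      rw [← sum_erase_bb m γ k, Finset.mul_sum]
      exact Finset.sum_congr rfl (fun j _ => rfl)
    rw [hsum]
    simp only [PP, Matrix.of_apply]
    by_cases hk : k = 0
    · subst hk
      fin_cases γ <;> fin_cases ε <;>
        simp [sgn, flip2, bb, ev] <;> field_simp <;> try ring1
    · by_cases hk2 : k = lst m
      · subst hk2
        fin_cases γ <;> fin_cases ε <;>
          simp [sgn, flip2, bb, ev, lst_ne_zero m, if_neg (Ne.symm (lst_ne_zero m))] <;>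
            field_simp <;> try ring1
      · fin_cases γ <;> fin_cases ε <;>
          simp [sgn, flip2, bb, ev, hk, hk2, if_neg (Ne.symm hk),
            if_neg (Ne.symm (lst_ne_zero m))] <;> field_simp <;> try ring1
  · rw [sum_nbr_leaf m i hi]
    have hdd : dd m (i, ε) = 2 := by simp [dd, hi]
    rw [hdd]
    simp only [PP, Matrix.of_apply]
    by_cases hk : k = 0
    · subst hk
      fin_cases γ <;> fin_cases ε <;>
        simp [sgn, flip2, bb, ev, hi] <;> field_simp <;> try ring1
    · by_cases hk2 : k = lst m
      · subst hk2
        fin_cases γ <;> fin_cases ε <;>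
          simp [sgn, flip2, bb, ev, hi, lst_ne_zero m] <;> field_simp <;> try ring1
      · fin_cases γ <;> fin_cases ε <;>
          simp [sgn, flip2, bb, ev, hi, hk, hk2, if_neg (Ne.symm hk),
            if_neg (Ne.symm (lst_ne_zero m))] <;> field_simp <;> try ring1

lemma LP_eq_PD : Lp m * PP m = PP m * Matrix.diagonal (ev m) := by
  apply Matrix.ext
  intro p c
  obtain ⟨k, γ⟩ := c
  have h := eigen m k γ p
  have h2 : ∑ q, Lp m p q * PP m q (k, γ) = ev m (k, γ) * PP m p (k, γ) := by
    simpa [Matrix.mulVec, dotProduct] using h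
  rw [Matrix.mul_apply, Matrix.mul_diagonal, h2, mul_comm]

lemma QP : QQ m * PP m = 1 := by
  apply Matrix.ext
  intro c c'
  obtain ⟨k, γ⟩ := c
  obtain ⟨k', γ'⟩ := c'
  rw [Matrix.mul_apply, Fintype.sum_prod_type]
  simp only [QQ, PP, Matrix.of_apply]
  have hterm : ∀ j : Fin (m + 2),
      ∑ δ : Fin 2, sgn γ δ * cc m γ k j * (sgn γ' δ * bb m γ' k' j) =
        (1 + sgn γ 1 * sgn γ' 1) * (cc m γ k j * bb m γ' k' j) := by
    intro j
    rw [Fin.sum_univ_two]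
    have hs0 : ∀ α : Fin 2, sgn α 0 = 1 := by intro α; simp [sgn]
    rw [hs0, hs0]
    ring
  rw [Finset.sum_congr rfl (fun j _ => hterm j), ← Finset.mul_sum]
  by_cases hγ : γ = γ'
  · subst hγ
    have hT : (1 + sgn γ 1 * sgn γ 1) = 2 := by fin_cases γ <;> norm_num [sgn]
    rw [hT, sum_cb]
    by_cases hkk : k = k'
    · subst hkk
      simp [Matrix.one_apply]
    · simp [Matrix.one_apply, hkk, Prod.ext_iff]
  · have hT : (1 + sgn γ 1 * sgn γ' 1) = 0 := by
      fin_cases γ <;> fin_cases γ' <;> first | (exfalso; exact hγ rfl) | norm_num [sgn]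
    rw [hT, zero_mul,
      Matrix.one_apply_ne (fun hh => hγ (congrArg Prod.snd hh))]

lemma sqrt_dd_ne (p : Fin (m + 2) × Fin 2) : Real.sqrt (dd m p) ≠ 0 :=
  ne_of_gt (Real.sqrt_pos.mpr (dd_pos m p))

lemma normLap_conj :
    normLap (snK2 (m + 2)) =
      Matrix.diagonal (fun p => Real.sqrt (dd m p)) * Lp m *
        Matrix.diagonal (fun p => (Real.sqrt (dd m p))⁻¹) := by
  apply Matrix.ext
  intro p q
  rw [Matrix.mul_diagonal, Matrix.diagonal_mul]
  by_cases hpq : p = q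
  · subst hpq
    simp only [normLap, Lp, Matrix.of_apply, if_pos rfl, if_true]
    rw [mul_one, mul_inv_cancel₀ (sqrt_dd_ne m p)]
  · by_cases hadj : (snK2 (m + 2)).Adj p q
    · simp only [normLap, Lp, Matrix.of_apply, if_neg hpq, if_pos hadj]
      rw [dd_eq_degree, dd_eq_degree,
        Real.sqrt_mul (le_of_lt (dd_pos m p))]
      have hp := sqrt_dd_ne m p
      have hq := sqrt_dd_ne m q
      have hdp : dd m p = Real.sqrt (dd m p) * Real.sqrt (dd m p) :=
        (Real.mul_self_sqrt (le_of_lt (dd_pos m p))).symm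
      rw [hdp]
      field_simp
      rw [Real.sqrt_sq (Real.sqrt_nonneg _)]
      try ring1
    · simp [normLap, Lp, hpq, hadj]

lemma charpoly_eq : (normLap (snK2 (m + 2))).charpoly =
    (Matrix.diagonal (ev m)).charpoly := by
  have hQP := QP m
  have hPQ : PP m * QQ m = 1 := mul_eq_one_comm.mp hQP
  have hLp : Lp m = PP m * Matrix.diagonal (ev m) * QQ m := by
    calc Lp m = Lp m * (PP m * QQ m) := by rw [hPQ, Matrix.mul_one]
      _ = Lp m * PP m * QQ m := by rw [Matrix.mul_assoc]
      _ = PP m * Matrix.diagonal (ev m) * QQ m := by rw [LP_eq_PD]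
  have hform : normLap (snK2 (m + 2)) =
      (Matrix.diagonal (fun p => Real.sqrt (dd m p)) * PP m) * Matrix.diagonal (ev m) *
        (QQ m * Matrix.diagonal (fun p => (Real.sqrt (dd m p))⁻¹)) := by
    rw [normLap_conj, hLp]
    simp only [Matrix.mul_assoc]
  rw [hform]
  apply charpoly_conj
  have hSSi : Matrix.diagonal (fun p => Real.sqrt (dd m p)) *
      Matrix.diagonal (fun p : Fin (m + 2) × Fin 2 => (Real.sqrt (dd m p))⁻¹) = 1 := by
    rw [Matrix.diagonal_mul_diagonal]
    have : (fun p : Fin (m + 2) × Fin 2 => Real.sqrt (dd m p) * (Real.sqrt (dd m p))⁻¹) =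
        fun _ => 1 := by
      funext p
      rw [mul_inv_cancel₀ (sqrt_dd_ne m p)]
    rw [this, Matrix.diagonal_one]
  calc Matrix.diagonal (fun p => Real.sqrt (dd m p)) * PP m *
        (QQ m * Matrix.diagonal (fun p => (Real.sqrt (dd m p))⁻¹))
      = Matrix.diagonal (fun p => Real.sqrt (dd m p)) * (PP m * QQ m) *
        Matrix.diagonal (fun p => (Real.sqrt (dd m p))⁻¹) := by
        simp only [Matrix.mul_assoc]
    _ = 1 := by rw [hPQ, Matrix.mul_one, hSSi]

lemma roots_eq : (normLap (snK2 (m + 2))).charpoly.roots =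
    Finset.univ.val.map (ev m) := by
  rw [charpoly_eq, charpoly_diagonal, Finset.prod_eq_multiset_prod]
  rw [show Finset.univ.val.map (fun i => (X : ℝ[X]) - C (ev m i)) =
    (Finset.univ.val.map (ev m)).map (fun a => (X : ℝ[X]) - C a) from by
      rw [Multiset.map_map]; rfl]
  exact Polynomial.roots_multiset_prod_X_sub_C _

lemma ev_inv_pair (k : Fin (m + 2)) :
    (ev m (k, 0))⁻¹ + (ev m (k, 1))⁻¹ =
      if k = 0 then (2 : ℝ)⁻¹
      else if k = lst m then
        (2 * (m : ℝ) + 4) / (3 * (m : ℝ) + 4) + (2 * (m : ℝ) + 4) / ((m : ℝ) + 4)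
      else (8 / 3 : ℝ) := by
  obtain ⟨h68, h34, h1, h2, h24⟩ := mfacts m
  have hm4 : ((m : ℝ) + 4) ≠ 0 := by positivity
  by_cases hk : k = 0
  · subst hk
    simp [ev]
  · by_cases hk2 : k = lst m
    · subst hk2
      simp only [ev, if_neg (lst_ne_zero m), if_pos rfl]
      norm_num [inv_div]
    · simp only [ev, if_neg hk, if_neg hk2]
      norm_num

lemma sum_ev_inv :
    ∑ c : Fin (m + 2) × Fin 2, (ev m c)⁻¹ =
      (2 : ℝ)⁻¹ + ((2 * (m : ℝ) + 4) / (3 * (m : ℝ) + 4) + (2 * (m : ℝ) + 4) / ((m : ℝ) + 4))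
        + (m : ℝ) * (8 / 3) := by
  rw [Fintype.sum_prod_type]
  rw [Finset.sum_congr rfl (fun k _ => by rw [Fin.sum_univ_two, ev_inv_pair m k])]
  rw [← Finset.add_sum_erase _ _ (Finset.mem_univ (0 : Fin (m + 2))), if_pos rfl]
  rw [Finset.sum_congr rfl (fun j hj => if_neg (Finset.mem_erase.mp hj).1 :
    ∀ j ∈ Finset.univ.erase (0 : Fin (m + 2)), (if j = 0 then (2 : ℝ)⁻¹
      else if j = lst m then
        (2 * (m : ℝ) + 4) / (3 * (m : ℝ) + 4) + (2 * (m : ℝ) + 4) / ((m : ℝ) + 4)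
      else (8 / 3 : ℝ)) =
      (if j = lst m then
        (2 * (m : ℝ) + 4) / (3 * (m : ℝ) + 4) + (2 * (m : ℝ) + 4) / ((m : ℝ) + 4)
      else (8 / 3 : ℝ)))]
  rw [sum_erase_one m (lst m) (lst_ne_zero m)]
  ring

end KAux

theorem mult_deg_kirchhoff_snK2 (n : ℕ) (hn : 2 ≤ n) :
    (2 * (3 * n - 2) : ℝ) *
        (((normLap (snK2 n)).charpoly.roots.filter (fun ν => ν ≠ 0)).map
          (fun ν => ν⁻¹)).sum =
      (48 * n ^ 3 + 25 * n ^ 2 - 180 * n + 116) / (3 * n + 6) := by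
  obtain ⟨m, rfl⟩ : ∃ m, n = m + 2 := ⟨n - 2, by omega⟩
  rw [KAux.roots_eq, Multiset.filter_map, Multiset.map_map]
  have hconv : ((Finset.univ.val.filter ((fun ν : ℝ => ν ≠ 0) ∘ KAux.ev m)).map
      ((fun ν : ℝ => ν⁻¹) ∘ KAux.ev m)).sum
      = ∑ c ∈ Finset.univ.filter (fun c => KAux.ev m c ≠ 0), (KAux.ev m c)⁻¹ := by
    rw [show Finset.univ.val.filter ((fun ν : ℝ => ν ≠ 0) ∘ KAux.ev m) =
      (Finset.univ.filter (fun c => KAux.ev m c ≠ 0)).val from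
        (Finset.filter_val _ _).symm]
    rfl
  rw [hconv, Finset.sum_filter_of_ne (fun c _ h => by
    intro h0
    exact h (by rw [h0, inv_zero]))]
  rw [KAux.sum_ev_inv]
  have h34 : (3 * (m : ℝ) + 4) ≠ 0 := by positivity
  have hm4 : ((m : ℝ) + 4) ≠ 0 := by positivity
  have hden : (3 * ((m : ℝ) + 2) + 6) ≠ 0 := by positivity
  push_cast
  field_simp
  ring
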